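/- Let X be an α-Hölder rough path over V, (Y, Y†, Y♯) a W-valued controlled path with respect to X on [a,b], and g : W → W' a C² function between Euclidean spaces. Then (g∘Y, (∇g∘Y)·Y†) is a W'-valued controlled path with respect to X on [a,b], with remainder g(Y)♯_{s,t} = ∇g(Y_s) Y♯_{s,t} + ∫₀¹ (1−θ) ∇²g(Y_s + θ(Y_t − Y_s))⟨Y_t − Y_s, Y_t − Y_s⟩ dθ, which is 2α-Hölder. -/

import Mathlib

section AuxRough
variable {W W' : Type*} [NormedAddCommGroup W] [NormedSpace ℝ W]
    [NormedAddCommGroup W'] [NormedSpace ℝ W'] [CompleteSpace W']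

private lemma aux_line_hasDerivAt (x v : W) (θ : ℝ) :
    HasDerivAt (fun θ : ℝ => x + θ • v) v θ := by
  simpa using ((hasDerivAt_id θ).smul_const v).const_add x

private lemma aux_taylor2 (g : W → W') (hg : ContDiff ℝ 2 g) (x v : W) :
    g (x + v) - g x - fderiv ℝ g x v
      = ∫ θ in (0:ℝ)..1, (1 - θ) • (fderiv ℝ (fderiv ℝ g) (x + θ • v) v v) := by
  have hgd : Differentiable ℝ g := hg.differentiable (by norm_num)
  have hg1 : ContDiff ℝ 1 (fderiv ℝ g) := hg.fderiv_right (by norm_num)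
  have hgd' : Differentiable ℝ (fderiv ℝ g) := hg1.differentiable (by norm_num)
  have hcont'' : Continuous (fderiv ℝ (fderiv ℝ g)) := hg1.continuous_fderiv (by norm_num)
  set L : ℝ → W := fun θ => x + θ • v with hL
  have hLc : Continuous L := by fun_prop
  have key : ∀ θ ∈ Set.uIcc (0:ℝ) 1,
      HasDerivAt (fun θ => g (L θ) + (1 - θ) • (fderiv ℝ g (L θ) v))
        ((1 - θ) • (fderiv ℝ (fderiv ℝ g) (L θ) v v)) θ := by
    intro θ _
    have hφ : HasDerivAt (fun θ => g (L θ)) (fderiv ℝ g (L θ) v) θ :=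
      (hgd (L θ)).hasFDerivAt.comp_hasDerivAt θ (aux_line_hasDerivAt x v θ)
    have hA : HasDerivAt (fun θ => fderiv ℝ g (L θ)) (fderiv ℝ (fderiv ℝ g) (L θ) v) θ :=
      (hgd' (L θ)).hasFDerivAt.comp_hasDerivAt θ (aux_line_hasDerivAt x v θ)
    have hB : HasDerivAt (fun θ => fderiv ℝ g (L θ) v)
        (fderiv ℝ (fderiv ℝ g) (L θ) v v) θ := by
      simpa using hA.clm_apply (hasDerivAt_const θ v)
    have hS : HasDerivAt (fun θ : ℝ => (1 - θ) • (fderiv ℝ g (L θ) v))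
        ((1 - θ) • (fderiv ℝ (fderiv ℝ g) (L θ) v v) + (-1 : ℝ) • (fderiv ℝ g (L θ) v)) θ := by
      exact HasDerivAt.smul (by simpa using (hasDerivAt_id θ).const_sub 1) hB
    have := hφ.add hS
    convert this using 1
    · rfl
    module
  have hint : IntervalIntegrable
      (fun θ : ℝ => (1 - θ) • (fderiv ℝ (fderiv ℝ g) (L θ) v v)) MeasureTheory.volume 0 1 := by
    apply Continuous.intervalIntegrable
    have : Continuous fun θ : ℝ => fderiv ℝ (fderiv ℝ g) (L θ) v v := by
      exact (ContinuousLinearMap.apply ℝ W' v).continuous.comp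
        (((ContinuousLinearMap.apply ℝ (W →L[ℝ] W') v).continuous.comp
          (hcont''.comp hLc)))
    exact (continuous_const.sub continuous_id).smul this
  have := intervalIntegral.integral_eq_sub_of_hasDerivAt key hint
  rw [this]
  simp [hL]
  abel

private lemma aux_fderiv_sub (g : W → W') (hg : ContDiff ℝ 2 g) (x v : W) (M : ℝ)
    (hM : ∀ θ ∈ Set.Icc (0:ℝ) 1, ‖fderiv ℝ (fderiv ℝ g) (x + θ • v)‖ ≤ M) :
    ‖fderiv ℝ g (x + v) - fderiv ℝ g x‖ ≤ M * ‖v‖ := by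
  have hg1 : ContDiff ℝ 1 (fderiv ℝ g) := hg.fderiv_right (by norm_num)
  have hgd' : Differentiable ℝ (fderiv ℝ g) := hg1.differentiable (by norm_num)
  have hcont'' : Continuous (fderiv ℝ (fderiv ℝ g)) := hg1.continuous_fderiv (by norm_num)
  set L : ℝ → W := fun θ => x + θ • v with hL
  have hLc : Continuous L := by fun_prop
  have key : ∀ θ ∈ Set.uIcc (0:ℝ) 1,
      HasDerivAt (fun θ => fderiv ℝ g (L θ)) (fderiv ℝ (fderiv ℝ g) (L θ) v) θ :=
    fun θ _ => (hgd' (L θ)).hasFDerivAt.comp_hasDerivAt θ (aux_line_hasDerivAt x v θ)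
  have hint : IntervalIntegrable (fun θ : ℝ => fderiv ℝ (fderiv ℝ g) (L θ) v)
      MeasureTheory.volume 0 1 := by
    apply Continuous.intervalIntegrable
    exact (ContinuousLinearMap.apply ℝ (W →L[ℝ] W') v).continuous.comp (hcont''.comp hLc)
  have heq := intervalIntegral.integral_eq_sub_of_hasDerivAt key hint
  have : fderiv ℝ g (x + v) - fderiv ℝ g x
      = ∫ θ in (0:ℝ)..1, fderiv ℝ (fderiv ℝ g) (L θ) v := by
    rw [heq]; simp [hL]
  rw [this]
  have := intervalIntegral.norm_integral_le_of_norm_le_const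
    (C := M * ‖v‖) (f := fun θ : ℝ => fderiv ℝ (fderiv ℝ g) (L θ) v) (a := (0:ℝ)) (b := 1) ?_
  · simpa using this
  · intro θ hθ
    rw [Set.uIoc_of_le (by norm_num)] at hθ
    calc ‖fderiv ℝ (fderiv ℝ g) (L θ) v‖ ≤ ‖fderiv ℝ (fderiv ℝ g) (L θ)‖ * ‖v‖ :=
          ContinuousLinearMap.le_opNorm _ _
      _ ≤ M * ‖v‖ := by
          apply mul_le_mul_of_nonneg_right _ (norm_nonneg v)
          exact hM θ ⟨le_of_lt hθ.1, hθ.2⟩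

private lemma aux_holder_continuousOn
    (a b α : ℝ) (hα0 : 0 < α)
    (Y : ℝ → W) (CY : ℝ)
    (hY : ∀ s t : ℝ, a ≤ s → s ≤ t → t ≤ b → ‖Y t - Y s‖ ≤ CY * (t - s) ^ α) :
    ContinuousOn Y (Set.Icc a b) := by
  intro u hu
  rw [ContinuousWithinAt, tendsto_iff_norm_sub_tendsto_zero]
  have hbound : ∀ x ∈ Set.Icc a b, ‖Y x - Y u‖ ≤ (max CY 0) * |x - u| ^ α := by
    intro x hx
    rcases le_total u x with h | h
    · refine le_trans (hY u x hu.1 h hx.2) ?_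
      rw [abs_of_nonneg (by linarith)]
      exact mul_le_mul_of_nonneg_right (le_max_left _ _) (Real.rpow_nonneg (by linarith) α)
    · rw [norm_sub_rev, abs_sub_comm]
      refine le_trans (hY x u hx.1 h hu.2) ?_
      rw [abs_of_nonneg (by linarith)]
      exact mul_le_mul_of_nonneg_right (le_max_left _ _) (Real.rpow_nonneg (by linarith) α)
  have htend : Filter.Tendsto (fun x : ℝ => (max CY 0) * |x - u| ^ α)
      (nhdsWithin u (Set.Icc a b)) (nhds 0) := by
    have h1 : ContinuousAt (fun x : ℝ => (max CY 0) * |x - u| ^ α) u := by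
      have h3 : ContinuousAt (fun x : ℝ => |x - u|) u := by fun_prop
      exact (h3.rpow_const (Or.inr hα0.le)).const_mul _
    have h4 := h1.continuousWithinAt (s := Set.Icc a b)
    rw [ContinuousWithinAt] at h4
    simpa [Real.zero_rpow (ne_of_gt hα0)] using h4
  refine squeeze_zero' ?_ ?_ htend
  · exact Filter.Eventually.of_forall fun x => norm_nonneg _
  · exact eventually_nhdsWithin_of_forall hbound

end AuxRough

set_option maxHeartbeats 1000000 in
/-- Stability of controlled paths under composition with a `C²` map.
If `(Y, Y†, Y♯)` is a `W`-valued controlled path w.r.t. the rough path `X` on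
`[a,b]` and `g : W → W'` is `C²`, then `(g ∘ Y, (∇g ∘ Y) · Y†)` is a `W'`-valued
controlled path on `[a,b]`: `g ∘ Y` and its Gubinelli derivative are `α`-Hölder,
the remainder `g(Y)♯_{s,t} = g(Y_t) − g(Y_s) − ∇g(Y_s)(Y†_s X¹_{s,t})` is
`2α`-Hölder, and it is given by the Taylor formula
`g(Y)♯_{s,t} = ∇g(Y_s) Y♯_{s,t}
  + ∫₀¹ (1−θ) ∇²g(Y_s + θ(Y_t − Y_s))⟨Y_t − Y_s, Y_t − Y_s⟩ dθ`. -/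
theorem controlled_path_comp_C2
    {V W W' : Type*} [NormedAddCommGroup V] [NormedSpace ℝ V]
    [NormedAddCommGroup W] [NormedSpace ℝ W]
    [NormedAddCommGroup W'] [NormedSpace ℝ W'] [CompleteSpace W']
    (a b α : ℝ) (hab : a ≤ b) (hα1 : 1/3 < α) (hα2 : α ≤ 1/2)
    (X1 : ℝ → ℝ → V)
    (Y : ℝ → W) (Ydag : ℝ → V →L[ℝ] W) (Ysharp : ℝ → ℝ → W)
    (CX1 CY CYd CYs : ℝ)
    (hX1 : ∀ s t : ℝ, a ≤ s → s ≤ t → t ≤ b → ‖X1 s t‖ ≤ CX1 * (t - s) ^ α)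
    (hY : ∀ s t : ℝ, a ≤ s → s ≤ t → t ≤ b → ‖Y t - Y s‖ ≤ CY * (t - s) ^ α)
    (hYd : ∀ s t : ℝ, a ≤ s → s ≤ t → t ≤ b → ‖Ydag t - Ydag s‖ ≤ CYd * (t - s) ^ α)
    (hYs : ∀ s t : ℝ, a ≤ s → s ≤ t → t ≤ b → ‖Ysharp s t‖ ≤ CYs * (t - s) ^ (2 * α))
    -- the controlled path relation `Y_t − Y_s = Y†_s X¹_{s,t} + Y♯_{s,t}`
    (hCtrl : ∀ s t : ℝ, a ≤ s → s ≤ t → t ≤ b →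
      Y t - Y s = Ydag s (X1 s t) + Ysharp s t)
    (g : W → W') (hg : ContDiff ℝ 2 g) :
    -- `(g ∘ Y, ∇g(Y)·Y†)` is a controlled path on `[a,b]` …
    (∃ C : ℝ, ∀ s t : ℝ, a ≤ s → s ≤ t → t ≤ b →
      ‖g (Y t) - g (Y s)‖ ≤ C * (t - s) ^ α
      ∧ ‖(fderiv ℝ g (Y t)).comp (Ydag t) - (fderiv ℝ g (Y s)).comp (Ydag s)‖
          ≤ C * (t - s) ^ α
      ∧ ‖g (Y t) - g (Y s) - fderiv ℝ g (Y s) (Ydag s (X1 s t))‖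
          ≤ C * (t - s) ^ (2 * α))
    -- … and the remainder is given by the Taylor formula.
    ∧ (∀ s t : ℝ, a ≤ s → s ≤ t → t ≤ b →
        g (Y t) - g (Y s) - fderiv ℝ g (Y s) (Ydag s (X1 s t))
          = fderiv ℝ g (Y s) (Ysharp s t)
            + ∫ θ in (0:ℝ)..1, (1 - θ) •
                iteratedFDeriv ℝ 2 g (Y s + θ • (Y t - Y s)) ![Y t - Y s, Y t - Y s]) := by
  have hα0 : 0 < α := lt_trans (by norm_num) hα1
  have hgd : Differentiable ℝ g := hg.differentiable (by norm_num)
  have hg1 : ContDiff ℝ 1 (fderiv ℝ g) := hg.fderiv_right (by norm_num)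
  have hcont' : Continuous (fderiv ℝ g) := hg.continuous_fderiv (by norm_num)
  have hcont'' : Continuous (fderiv ℝ (fderiv ℝ g)) := hg1.continuous_fderiv (by norm_num)
  -- the Taylor formula (second part of the statement)
  have hform : ∀ s t : ℝ, a ≤ s → s ≤ t → t ≤ b →
      g (Y t) - g (Y s) - fderiv ℝ g (Y s) (Ydag s (X1 s t))
        = fderiv ℝ g (Y s) (Ysharp s t)
          + ∫ θ in (0:ℝ)..1, (1 - θ) •
              iteratedFDeriv ℝ 2 g (Y s + θ • (Y t - Y s)) ![Y t - Y s, Y t - Y s] := by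
    intro s t hs hst ht
    have taylor' := aux_taylor2 g hg (Y s) (Y t - Y s)
    rw [show Y s + (Y t - Y s) = Y t from by abel] at taylor'
    simp only [iteratedFDeriv_two_apply, Matrix.cons_val_zero, Matrix.cons_val_one,
      Matrix.head_cons]
    have hsplit : Ydag s (X1 s t) = (Y t - Y s) - Ysharp s t := by
      rw [hCtrl s t hs hst ht]; abel
    rw [hsplit, map_sub, ← taylor']
    abel
  refine ⟨?_, hform⟩
  -- continuity of `Y` on `[a,b]`, compact set `K`, bounds on derivatives of `g`
  have hYc : ContinuousOn Y (Set.Icc a b) := aux_holder_continuousOn a b α hα0 Y CY hY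
  set K : Set W := (fun p : (ℝ × ℝ) × ℝ => Y p.1.1 + p.2 • (Y p.1.2 - Y p.1.1)) ''
      ((Set.Icc a b ×ˢ Set.Icc a b) ×ˢ Set.Icc (0:ℝ) 1) with hKdef
  have hK : IsCompact K := by
    apply IsCompact.image_of_continuousOn
      (((isCompact_Icc.prod isCompact_Icc).prod isCompact_Icc))
    have h1 : ContinuousOn (fun p : (ℝ × ℝ) × ℝ => Y p.1.1)
        ((Set.Icc a b ×ˢ Set.Icc a b) ×ˢ Set.Icc (0:ℝ) 1) :=
      hYc.comp (by fun_prop) (fun p hp => hp.1.1)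
    have h2 : ContinuousOn (fun p : (ℝ × ℝ) × ℝ => Y p.1.2)
        ((Set.Icc a b ×ˢ Set.Icc a b) ×ˢ Set.Icc (0:ℝ) 1) :=
      hYc.comp (by fun_prop) (fun p hp => hp.1.2)
    exact h1.add (continuous_snd.continuousOn.smul (h2.sub h1))
  have hmem : ∀ {s t θ : ℝ}, a ≤ s → s ≤ t → t ≤ b → θ ∈ Set.Icc (0:ℝ) 1 →
      Y s + θ • (Y t - Y s) ∈ K := by
    intro s t θ hs hst ht hθ
    exact ⟨((s, t), θ), ⟨⟨⟨hs, hst.trans ht⟩, ⟨hs.trans hst, ht⟩⟩, hθ⟩, rfl⟩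
  have hYK : ∀ {s : ℝ}, a ≤ s → s ≤ b → Y s ∈ K := by
    intro s hs hsb
    have := hmem hs (le_refl s) hsb (Set.mem_Icc.2 ⟨le_refl 0, zero_le_one⟩)
    simpa using this
  obtain ⟨M1, hM1⟩ := hK.exists_bound_of_continuousOn (hcont'.continuousOn)
  obtain ⟨M2, hM2⟩ := hK.exists_bound_of_continuousOn (f := fderiv ℝ (fderiv ℝ g)) (by exact hcont''.continuousOn)
  have hM1n : 0 ≤ M1 := le_trans (norm_nonneg _) (hM1 _ (hYK (le_refl a) hab))
  have hM2n : 0 ≤ M2 := le_trans (norm_nonneg _) (hM2 _ (hYK (le_refl a) hab))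
  set CY' := max CY 0 with hCY'def
  set CYd' := max CYd 0 with hCYd'def
  set CYs' := max CYs 0 with hCYs'def
  have hCY'n : 0 ≤ CY' := le_max_right _ _
  have hCYd'n : 0 ≤ CYd' := le_max_right _ _
  have hCYs'n : 0 ≤ CYs' := le_max_right _ _
  set Q := (b - a) ^ α with hQdef
  have hQn : 0 ≤ Q := Real.rpow_nonneg (by linarith) α
  set MD := ‖Ydag a‖ + CYd' * Q with hMDdef
  refine ⟨(M1 * CY' + M2 * (CY' * CY') * Q) + (M2 * CY' * MD + M1 * CYd')
      + (M1 * CYs' + M2 * (CY' * CY')), ?_⟩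
  intro s t hs hst ht
  have hts : (0:ℝ) ≤ t - s := by linarith
  set P := (t - s) ^ α with hPdef
  have hPn : 0 ≤ P := Real.rpow_nonneg hts α
  have hPQ : P ≤ Q := Real.rpow_le_rpow hts (by linarith) hα0.le
  have hP2 : (t - s) ^ (2 * α) = P * P := by
    rw [two_mul, Real.rpow_add' hts (by positivity)]
  have hv : ‖Y t - Y s‖ ≤ CY' * P :=
    le_trans (hY s t hs hst ht)
      (mul_le_mul_of_nonneg_right (le_max_left _ _) hPn)
  have hvn : 0 ≤ ‖Y t - Y s‖ := norm_nonneg _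
  have hvd : ‖Ydag t - Ydag s‖ ≤ CYd' * P :=
    le_trans (hYd s t hs hst ht)
      (mul_le_mul_of_nonneg_right (le_max_left _ _) hPn)
  have hvs : ‖Ysharp s t‖ ≤ CYs' * (P * P) := by
    rw [← hP2]
    exact le_trans (hYs s t hs hst ht)
      (mul_le_mul_of_nonneg_right (le_max_left _ _) (Real.rpow_nonneg hts _))
  -- bound on the integral term
  have hI : ‖∫ θ in (0:ℝ)..1, (1 - θ) •
      (fderiv ℝ (fderiv ℝ g) (Y s + θ • (Y t - Y s)) (Y t - Y s) (Y t - Y s))‖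
      ≤ M2 * (‖Y t - Y s‖ * ‖Y t - Y s‖) := by
    have hb : ∀ θ ∈ Set.uIoc (0:ℝ) 1, ‖(1 - θ) •
        (fderiv ℝ (fderiv ℝ g) (Y s + θ • (Y t - Y s)) (Y t - Y s) (Y t - Y s))‖
        ≤ M2 * (‖Y t - Y s‖ * ‖Y t - Y s‖) := by
      intro θ hθ
      rw [Set.uIoc_of_le (by norm_num)] at hθ
      have hzK : Y s + θ • (Y t - Y s) ∈ K := hmem hs hst ht ⟨hθ.1.le, hθ.2⟩
      have h1 : ‖fderiv ℝ (fderiv ℝ g) (Y s + θ • (Y t - Y s)) (Y t - Y s) (Y t - Y s)‖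
          ≤ M2 * (‖Y t - Y s‖ * ‖Y t - Y s‖) := by
        calc ‖fderiv ℝ (fderiv ℝ g) (Y s + θ • (Y t - Y s)) (Y t - Y s) (Y t - Y s)‖
            ≤ ‖fderiv ℝ (fderiv ℝ g) (Y s + θ • (Y t - Y s)) (Y t - Y s)‖ * ‖Y t - Y s‖ :=
              ContinuousLinearMap.le_opNorm _ _
          _ ≤ (‖fderiv ℝ (fderiv ℝ g) (Y s + θ • (Y t - Y s))‖ * ‖Y t - Y s‖) * ‖Y t - Y s‖ :=
              mul_le_mul_of_nonneg_right (ContinuousLinearMap.le_opNorm _ _) hvn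
          _ ≤ M2 * (‖Y t - Y s‖ * ‖Y t - Y s‖) := by
              rw [mul_assoc]
              exact mul_le_mul_of_nonneg_right (hM2 _ hzK) (by positivity)
      calc ‖(1 - θ) • (fderiv ℝ (fderiv ℝ g) (Y s + θ • (Y t - Y s)) (Y t - Y s) (Y t - Y s))‖
          = |1 - θ| * ‖fderiv ℝ (fderiv ℝ g) (Y s + θ • (Y t - Y s)) (Y t - Y s) (Y t - Y s)‖ :=
            by rw [norm_smul, Real.norm_eq_abs]
        _ ≤ 1 * (M2 * (‖Y t - Y s‖ * ‖Y t - Y s‖)) :=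
            mul_le_mul (abs_le.2 ⟨by linarith [hθ.1, hθ.2], by linarith [hθ.1, hθ.2]⟩)
              h1 (norm_nonneg _) zero_le_one
        _ = M2 * (‖Y t - Y s‖ * ‖Y t - Y s‖) := one_mul _
    have := intervalIntegral.norm_integral_le_of_norm_le_const hb
    simpa using this
  have taylor' := aux_taylor2 g hg (Y s) (Y t - Y s)
  rw [show Y s + (Y t - Y s) = Y t from by abel] at taylor'
  have hDgYs : ‖fderiv ℝ g (Y s)‖ ≤ M1 := hM1 _ (hYK hs (hst.trans ht))
  -- (i) Hölder bound for g ∘ Y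
  have hi : ‖g (Y t) - g (Y s)‖ ≤ (M1 * CY' + M2 * (CY' * CY') * Q) * P := by
    have he : g (Y t) - g (Y s) = fderiv ℝ g (Y s) (Y t - Y s)
        + ∫ θ in (0:ℝ)..1, (1 - θ) •
            (fderiv ℝ (fderiv ℝ g) (Y s + θ • (Y t - Y s)) (Y t - Y s) (Y t - Y s)) := by
      rw [← taylor']; abel
    rw [he]
    refine le_trans (norm_add_le _ _) ?_
    have h1 : ‖fderiv ℝ g (Y s) (Y t - Y s)‖ ≤ M1 * (CY' * P) :=
      le_trans (ContinuousLinearMap.le_opNorm _ _)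
        (mul_le_mul hDgYs hv hvn hM1n)
    have h2 : M2 * (‖Y t - Y s‖ * ‖Y t - Y s‖) ≤ M2 * ((CY' * P) * (CY' * Q)) := by
      apply mul_le_mul_of_nonneg_left _ hM2n
      exact mul_le_mul hv (le_trans hv (mul_le_mul_of_nonneg_left hPQ hCY'n))
        hvn (mul_nonneg hCY'n hPn)
    linarith [le_trans hI h2]
  -- (ii) Hölder bound for the Gubinelli derivative
  have hii : ‖(fderiv ℝ g (Y t)).comp (Ydag t) - (fderiv ℝ g (Y s)).comp (Ydag s)‖
      ≤ (M2 * CY' * MD + M1 * CYd') * P := by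
    have hsplit : (fderiv ℝ g (Y t)).comp (Ydag t) - (fderiv ℝ g (Y s)).comp (Ydag s)
        = (fderiv ℝ g (Y t) - fderiv ℝ g (Y s)).comp (Ydag t)
          + (fderiv ℝ g (Y s)).comp (Ydag t - Ydag s) := by
      ext x
      simp [ContinuousLinearMap.comp_apply, map_sub]
    rw [hsplit]
    refine le_trans (norm_add_le _ _) ?_
    have hDg : ‖fderiv ℝ g (Y t) - fderiv ℝ g (Y s)‖ ≤ M2 * ‖Y t - Y s‖ := by
      have := aux_fderiv_sub g hg (Y s) (Y t - Y s) M2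
        (fun θ hθ => hM2 _ (hmem hs hst ht hθ))
      rwa [show Y s + (Y t - Y s) = Y t from by abel] at this
    have hYdt : ‖Ydag t‖ ≤ MD := by
      have h3 := hYd a t (le_refl a) (hs.trans hst) ht
      have h4 : ‖Ydag t‖ ≤ ‖Ydag a‖ + ‖Ydag t - Ydag a‖ := by
        calc ‖Ydag t‖ = ‖Ydag a + (Ydag t - Ydag a)‖ := by rw [add_sub_cancel]
          _ ≤ ‖Ydag a‖ + ‖Ydag t - Ydag a‖ := norm_add_le _ _
      have h5 : (t - a) ^ α ≤ Q := Real.rpow_le_rpow (by linarith) (by linarith) hα0.le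
      have h6 : CYd * (t - a) ^ α ≤ CYd' * Q := by
        calc CYd * (t - a) ^ α ≤ CYd' * (t - a) ^ α :=
              mul_le_mul_of_nonneg_right (le_max_left _ _) (Real.rpow_nonneg (by linarith) α)
          _ ≤ CYd' * Q := mul_le_mul_of_nonneg_left h5 hCYd'n
      rw [hMDdef]
      linarith [le_trans h3 h6]
    have hA : ‖(fderiv ℝ g (Y t) - fderiv ℝ g (Y s)).comp (Ydag t)‖
        ≤ (M2 * (CY' * P)) * MD := by
      refine le_trans (ContinuousLinearMap.opNorm_comp_le _ _) ?_
      have : ‖fderiv ℝ g (Y t) - fderiv ℝ g (Y s)‖ ≤ M2 * (CY' * P) :=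
        le_trans hDg (mul_le_mul_of_nonneg_left hv hM2n)
      exact mul_le_mul this hYdt (norm_nonneg _)
        (mul_nonneg hM2n (mul_nonneg hCY'n hPn))
    have hB : ‖(fderiv ℝ g (Y s)).comp (Ydag t - Ydag s)‖ ≤ M1 * (CYd' * P) := by
      refine le_trans (ContinuousLinearMap.opNorm_comp_le _ _) ?_
      exact mul_le_mul hDgYs hvd (norm_nonneg _) hM1n
    linarith [hA, hB]
  -- (iii) 2α-Hölder bound for the remainder
  have hiii : ‖g (Y t) - g (Y s) - fderiv ℝ g (Y s) (Ydag s (X1 s t))‖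
      ≤ (M1 * CYs' + M2 * (CY' * CY')) * (t - s) ^ (2 * α) := by
    rw [hform s t hs hst ht]
    simp only [iteratedFDeriv_two_apply, Matrix.cons_val_zero, Matrix.cons_val_one,
      Matrix.head_cons]
    refine le_trans (norm_add_le _ _) ?_
    have h1 : ‖fderiv ℝ g (Y s) (Ysharp s t)‖ ≤ M1 * (CYs' * (P * P)) :=
      le_trans (ContinuousLinearMap.le_opNorm _ _)
        (mul_le_mul hDgYs hvs (norm_nonneg _) hM1n)
    have h2 : M2 * (‖Y t - Y s‖ * ‖Y t - Y s‖) ≤ M2 * ((CY' * P) * (CY' * P)) :=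
      mul_le_mul_of_nonneg_left (mul_le_mul hv hv hvn (mul_nonneg hCY'n hPn)) hM2n
    rw [hP2]
    linarith [le_trans hI h2]
  have hPQn : 0 ≤ (t - s) ^ (2 * α) := Real.rpow_nonneg hts _
  have hMDn : 0 ≤ MD := by
    rw [hMDdef]
    exact add_nonneg (norm_nonneg _) (mul_nonneg hCYd'n hQn)
  have hC1n : 0 ≤ M1 * CY' + M2 * (CY' * CY') * Q :=
    add_nonneg (mul_nonneg hM1n hCY'n)
      (mul_nonneg (mul_nonneg hM2n (mul_nonneg hCY'n hCY'n)) hQn)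
  have hC2n : 0 ≤ M2 * CY' * MD + M1 * CYd' :=
    add_nonneg (mul_nonneg (mul_nonneg hM2n hCY'n) hMDn) (mul_nonneg hM1n hCYd'n)
  have hC3n : 0 ≤ M1 * CYs' + M2 * (CY' * CY') :=
    add_nonneg (mul_nonneg hM1n hCYs'n) (mul_nonneg hM2n (mul_nonneg hCY'n hCY'n))
  refine ⟨?_, ?_, ?_⟩
  · linarith [hi, mul_nonneg hC2n hPn, mul_nonneg hC3n hPn]
  · linarith [hii, mul_nonneg hC1n hPn, mul_nonneg hC3n hPn]
  · linarith [hiii, mul_nonneg hC1n hPQn, mul_nonneg hC2n hPQn]
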